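/- Let u, φ : [0,1] → ℝ be continuously differentiable with u(0) = u(1) = 0 and φ(0) = φ(1) = 0. Then |∫₀¹ u(x) u′(x) φ(x) dx| ≤ (1/√2) (∫₀¹ u² dx)^{3/4} (∫₀¹ (u′)² dx)^{1/4} (∫₀¹ (φ′)² dx)^{1/2}. In particular, |∫₀¹ u u′ φ dx| ≤ C |u|₂ |u′|₂ |φ′|₂ for some absolute constant C. (This is the bound |∂_x(u²)|_{H₀^{1*}} ≤ C |u|₂ |∇u|₂ on the Burgers nonlinearity used in estimate (A3') and Lemma 2.2.) -/

import Mathlib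

open MeasureTheory intervalIntegral

private lemma memL2_of_continuous (f : ℝ → ℝ) (hf : Continuous f) :
    MemLp f (ENNReal.ofReal 2) (volume.restrict (Set.Ioc (0:ℝ) 1)) := by
  have hfin : IsFiniteMeasure (volume.restrict (Set.Ioc (0:ℝ) 1)) :=
    ⟨by simp [Measure.restrict_apply_univ, Real.volume_Ioc]⟩
  obtain ⟨C, hC⟩ := (isCompact_Icc (a := (0:ℝ)) (b := 1)).exists_bound_of_continuousOn
    hf.continuousOn
  exact MemLp.of_bound hf.aestronglyMeasurable C
    ((ae_restrict_iff' measurableSet_Ioc).2 (ae_of_all _ fun x hx =>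
      hC x (Set.Ioc_subset_Icc_self hx)))

/-- Cauchy–Schwarz on `[0,1]` for continuous functions. -/
private lemma cs_interval (f g : ℝ → ℝ) (hf : Continuous f) (hg : Continuous g) :
    |∫ x in (0:ℝ)..1, f x * g x| ≤
      (∫ x in (0:ℝ)..1, f x ^ 2) ^ ((1:ℝ)/2) * (∫ x in (0:ℝ)..1, g x ^ 2) ^ ((1:ℝ)/2) := by
  have h01 : (0:ℝ) ≤ 1 := by norm_num
  have hsq : ∀ y : ℝ, ‖y‖ ^ (2:ℝ) = y ^ 2 := fun y => by
    rw [show (2:ℝ) = ((2:ℕ):ℝ) by norm_num, Real.rpow_natCast, Real.norm_eq_abs, sq_abs]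
  have hpq : Real.HolderConjugate 2 2 := Real.holderConjugate_iff.mpr ⟨one_lt_two, by norm_num⟩
  have key := integral_mul_norm_le_Lp_mul_Lq (μ := volume.restrict (Set.Ioc (0:ℝ) 1))
    (f := f) (g := g) hpq (memL2_of_continuous f hf) (memL2_of_continuous g hg)
  calc |∫ x in (0:ℝ)..1, f x * g x| ≤ ∫ x in (0:ℝ)..1, |f x * g x| :=
        abs_integral_le_integral_abs h01
    _ = ∫ x in Set.Ioc (0:ℝ) 1, ‖f x‖ * ‖g x‖ := by
        rw [integral_of_le h01]; simp [abs_mul]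
    _ ≤ (∫ x in Set.Ioc (0:ℝ) 1, ‖f x‖ ^ (2:ℝ)) ^ ((1:ℝ)/2) *
          (∫ x in Set.Ioc (0:ℝ) 1, ‖g x‖ ^ (2:ℝ)) ^ ((1:ℝ)/2) := key
    _ = (∫ x in (0:ℝ)..1, f x ^ 2) ^ ((1:ℝ)/2) * (∫ x in (0:ℝ)..1, g x ^ 2) ^ ((1:ℝ)/2) := by
        rw [integral_of_le h01, integral_of_le h01]; simp_rw [hsq]

theorem burgers_nonlinearity_dual_bound (u φ : ℝ → ℝ)
    (hu : ContDiff ℝ 1 u) (hu0 : u 0 = 0) (hu1 : u 1 = 0)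
    (hφ : ContDiff ℝ 1 φ) (hφ0 : φ 0 = 0) (hφ1 : φ 1 = 0) :
    |∫ x in (0:ℝ)..1, u x * deriv u x * φ x| ≤
      (1 / Real.sqrt 2) * (∫ x in (0:ℝ)..1, u x ^ 2) ^ ((3:ℝ)/4) *
        (∫ x in (0:ℝ)..1, deriv u x ^ 2) ^ ((1:ℝ)/4) *
        (∫ x in (0:ℝ)..1, deriv φ x ^ 2) ^ ((1:ℝ)/2) := by
  have h01 : (0:ℝ) ≤ 1 := by norm_num
  have hcu : Continuous u := hu.continuous
  have hcφ : Continuous φ := hφ.continuous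
  have hu' : Continuous (deriv u) := hu.continuous_deriv le_rfl
  have hφ' : Continuous (deriv φ) := hφ.continuous_deriv le_rfl
  have hdu : ∀ x : ℝ, HasDerivAt u (deriv u x) x := fun x =>
    ((hu.differentiable one_ne_zero) x).hasDerivAt
  have hdφ : ∀ x : ℝ, HasDerivAt φ (deriv φ x) x := fun x =>
    ((hφ.differentiable one_ne_zero) x).hasDerivAt
  have hsq : ∀ x : ℝ, HasDerivAt (fun y => u y ^ 2) (2 * u x * deriv u x) x := fun x => by
    simpa [mul_comm, mul_assoc] using (hdu x).fun_pow 2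
  set A := ∫ x in (0:ℝ)..1, u x ^ 2 with hA
  set B := ∫ x in (0:ℝ)..1, deriv u x ^ 2 with hB
  set Cc := ∫ x in (0:ℝ)..1, deriv φ x ^ 2 with hCc
  have hA0 : 0 ≤ A := intervalIntegral.integral_nonneg h01 (fun x _ => sq_nonneg _)
  have hB0 : 0 ≤ B := intervalIntegral.integral_nonneg h01 (fun x _ => sq_nonneg _)
  have hCc0 : 0 ≤ Cc := intervalIntegral.integral_nonneg h01 (fun x _ => sq_nonneg _)
  -- integration by parts: ∫ u u' φ = -(1/2) ∫ u² φ'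
  have hI1 : IntervalIntegrable (fun x => 2 * u x * deriv u x * φ x) volume 0 1 :=
    (((continuous_const.mul hcu).mul hu').mul hcφ).intervalIntegrable 0 1
  have hI2 : IntervalIntegrable (fun x => u x ^ 2 * deriv φ x) volume 0 1 :=
    ((hcu.pow 2).mul hφ').intervalIntegrable 0 1
  have hIBP : ∫ x in (0:ℝ)..1,
      (2 * u x * deriv u x * φ x + u x ^ 2 * deriv φ x) = 0 := by
    rw [intervalIntegral.integral_eq_sub_of_hasDerivAt
      (f := fun x => u x ^ 2 * φ x)
      (fun x _ => (hsq x).mul (hdφ x)) (hI1.add hI2)]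
    simp [hu0, hu1, hφ0, hφ1]
  have hsplit : (2:ℝ) * (∫ x in (0:ℝ)..1, u x * deriv u x * φ x) +
      (∫ x in (0:ℝ)..1, u x ^ 2 * deriv φ x) = 0 := by
    rw [← intervalIntegral.integral_const_mul,
      show (fun x => 2 * (u x * deriv u x * φ x)) = (fun x => 2 * u x * deriv u x * φ x)
        from funext fun x => by ring,
      ← intervalIntegral.integral_add hI1 hI2]
    exact hIBP
  have habs : |∫ x in (0:ℝ)..1, u x * deriv u x * φ x| =
      (1/2) * |∫ x in (0:ℝ)..1, u x ^ 2 * deriv φ x| := by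
    have : (∫ x in (0:ℝ)..1, u x * deriv u x * φ x) =
        -(1/2) * ∫ x in (0:ℝ)..1, u x ^ 2 * deriv φ x := by linarith
    rw [this, abs_mul]
    norm_num
  -- pointwise bound u x ^ 2 ≤ 2 √A √B on [0,1]
  have hcsuu' : (∫ x in (0:ℝ)..1, |u x| * |deriv u x|) ≤
      A ^ ((1:ℝ)/2) * B ^ ((1:ℝ)/2) := by
    have := cs_interval (fun x => |u x|) (fun x => |deriv u x|) hcu.abs hu'.abs
    simp only [sq_abs] at this
    exact le_trans (le_abs_self _) this
  set M := 2 * (A ^ ((1:ℝ)/2) * B ^ ((1:ℝ)/2)) with hM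
  have hpt : ∀ x ∈ Set.Icc (0:ℝ) 1, u x ^ 2 ≤ M := by
    intro x hx
    have habsint : IntervalIntegrable (fun t => |2 * u t * deriv u t|) volume 0 1 :=
      (((continuous_const.mul hcu).mul hu').abs).intervalIntegrable 0 1
    have hftc : (∫ t in (0:ℝ)..x, 2 * u t * deriv u t) = u x ^ 2 := by
      rw [intervalIntegral.integral_eq_sub_of_hasDerivAt (f := fun y => u y ^ 2)
        (fun t _ => hsq t)
        ((((continuous_const.mul hcu).mul hu')).intervalIntegrable 0 x)]
      simp [hu0]
    calc u x ^ 2 = ∫ t in (0:ℝ)..x, 2 * u t * deriv u t := hftc.symm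
      _ ≤ |∫ t in (0:ℝ)..x, 2 * u t * deriv u t| := le_abs_self _
      _ ≤ ∫ t in (0:ℝ)..x, |2 * u t * deriv u t| :=
          intervalIntegral.abs_integral_le_integral_abs hx.1
      _ ≤ ∫ t in (0:ℝ)..1, |2 * u t * deriv u t| :=
          intervalIntegral.integral_mono_interval le_rfl hx.1 hx.2
            (ae_of_all _ fun t => abs_nonneg _) habsint
      _ = 2 * ∫ t in (0:ℝ)..1, |u t| * |deriv u t| := by
          rw [← intervalIntegral.integral_const_mul]
          congr 1 with t
          rw [abs_mul, abs_mul]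
          simp [abs_of_nonneg, mul_assoc]
      _ ≤ M := by rw [hM]; nlinarith [hcsuu']
  -- ∫ (u²)² ≤ M * A
  have hQ : (∫ x in (0:ℝ)..1, (u x ^ 2) ^ 2) ≤ M * A := by
    calc (∫ x in (0:ℝ)..1, (u x ^ 2) ^ 2) ≤ ∫ x in (0:ℝ)..1, M * u x ^ 2 := by
          refine intervalIntegral.integral_mono_on h01
            (((hcu.pow 2).pow 2).intervalIntegrable 0 1)
            ((continuous_const.mul (hcu.pow 2)).intervalIntegrable 0 1) (fun x hx => ?_)
          have h1 := hpt x hx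
          nlinarith [sq_nonneg (u x)]
      _ = M * A := by rw [intervalIntegral.integral_const_mul]
  have hQ0 : 0 ≤ ∫ x in (0:ℝ)..1, (u x ^ 2) ^ 2 :=
    intervalIntegral.integral_nonneg h01 (fun x _ => sq_nonneg _)
  -- Cauchy–Schwarz on u² and φ'
  have hcs2 : |∫ x in (0:ℝ)..1, u x ^ 2 * deriv φ x| ≤
      (∫ x in (0:ℝ)..1, (u x ^ 2) ^ 2) ^ ((1:ℝ)/2) * Cc ^ ((1:ℝ)/2) :=
    cs_interval (fun x => u x ^ 2) (deriv φ) (hcu.pow 2) hφ'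
  -- rpow algebra
  have hMA : (M * A) ^ ((1:ℝ)/2) = Real.sqrt 2 * (A ^ ((3:ℝ)/4) * B ^ ((1:ℝ)/4)) := by
    have hA32 : A ^ ((1:ℝ)/2) * A = A ^ ((3:ℝ)/2) := by
      rw [show ((3:ℝ)/2) = (1:ℝ)/2 + 1 by norm_num,
        Real.rpow_add' hA0 (by norm_num), Real.rpow_one]
    have : M * A = 2 * (A ^ ((3:ℝ)/2) * B ^ ((1:ℝ)/2)) := by
      rw [hM, ← hA32]; ring
    rw [this, Real.mul_rpow (by norm_num)
        (mul_nonneg (Real.rpow_nonneg hA0 _) (Real.rpow_nonneg hB0 _)),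
      Real.mul_rpow (Real.rpow_nonneg hA0 _) (Real.rpow_nonneg hB0 _),
      ← Real.rpow_mul hA0, ← Real.rpow_mul hB0, Real.sqrt_eq_rpow]
    norm_num
  have hmono : (∫ x in (0:ℝ)..1, (u x ^ 2) ^ 2) ^ ((1:ℝ)/2) ≤ (M * A) ^ ((1:ℝ)/2) :=
    Real.rpow_le_rpow hQ0 hQ (by norm_num)
  have hhalf : (1:ℝ)/2 * Real.sqrt 2 = 1 / Real.sqrt 2 := by
    rw [eq_div_iff (by positivity : Real.sqrt 2 ≠ 0)]
    rw [mul_assoc, Real.mul_self_sqrt (by norm_num : (0:ℝ) ≤ 2)]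
    norm_num
  calc |∫ x in (0:ℝ)..1, u x * deriv u x * φ x|
      = (1/2) * |∫ x in (0:ℝ)..1, u x ^ 2 * deriv φ x| := habs
    _ ≤ (1/2) * ((∫ x in (0:ℝ)..1, (u x ^ 2) ^ 2) ^ ((1:ℝ)/2) * Cc ^ ((1:ℝ)/2)) := by
        have := hcs2; nlinarith [Real.rpow_nonneg hCc0 ((1:ℝ)/2), abs_nonneg (∫ x in (0:ℝ)..1, u x ^ 2 * deriv φ x)]
    _ ≤ (1/2) * ((M * A) ^ ((1:ℝ)/2) * Cc ^ ((1:ℝ)/2)) := by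
        have hc := Real.rpow_nonneg hCc0 ((1:ℝ)/2)
        nlinarith [hmono, hQ0, Real.rpow_nonneg hQ0 ((1:ℝ)/2)]
    _ = (1 / Real.sqrt 2) * A ^ ((3:ℝ)/4) * B ^ ((1:ℝ)/4) * Cc ^ ((1:ℝ)/2) := by
        rw [hMA, ← hhalf]; ring
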